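/- HSIC as squared MMD between the joint and the product of marginals: ‖ ∫ Φ dP − ∫ Φ d(P_X ⊗ P_Y) ‖²_F = ∫∫ k(x,x') l(y,y') d(P ⊗ P)((x,y),(x',y')) + ( ∫∫ k(x,x') d(P_X ⊗ P_X) ) · ( ∫∫ l(y,y') d(P_Y ⊗ P_Y) ) − 2 ∫∫∫ k(x,x'') l(y,y'') dP(x,y) dP_X(x'') dP_Y(y''). -/

import Mathlib

open MeasureTheory
open scoped RealInnerProductSpace

open scoped ENNReal


section Aux

variable {α : Type*} {β : Type*} [MeasurableSpace α] [MeasurableSpace β]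
  {F : Type*} [NormedAddCommGroup F] [InnerProductSpace ℝ F] [CompleteSpace F]
  {μ : Measure α} {ν : Measure β}

omit [CompleteSpace F] in
lemma aux_integrable_inner [SigmaFinite μ] [SigmaFinite ν]
    {f : α → F} {g : β → F} (hfm : StronglyMeasurable f) (hgm : StronglyMeasurable g)
    (hf : Integrable f μ) (hg : Integrable g ν) :
    Integrable (fun z : α × β => ⟪f z.1, g z.2⟫) (μ.prod ν) := by
  refine (hf.norm.mul_prod hg.norm).mono ?_ ?_
  · exact ((hfm.comp_measurable measurable_fst).inner
      (hgm.comp_measurable measurable_snd)).aestronglyMeasurable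
  · refine Filter.Eventually.of_forall fun z => ?_
    calc ‖⟪f z.1, g z.2⟫‖ ≤ ‖f z.1‖ * ‖g z.2‖ := norm_inner_le_norm _ _
      _ ≤ ‖‖f z.1‖ * ‖g z.2‖‖ := le_abs_self _

lemma aux_inner_integral [SigmaFinite μ] [SigmaFinite ν]
    {f : α → F} {g : β → F} (hfm : StronglyMeasurable f) (hgm : StronglyMeasurable g)
    (hf : Integrable f μ) (hg : Integrable g ν) :
    ⟪∫ x, f x ∂μ, ∫ y, g y ∂ν⟫ = ∫ z, ⟪f z.1, g z.2⟫ ∂(μ.prod ν) := by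
  have hint : Integrable (fun z : α × β => ⟪f z.1, g z.2⟫) (μ.prod ν) :=
    aux_integrable_inner hfm hgm hf hg
  calc ⟪∫ x, f x ∂μ, ∫ y, g y ∂ν⟫
      = ∫ y, ⟪∫ x, f x ∂μ, g y⟫ ∂ν := (integral_inner hg _).symm
    _ = ∫ y, ∫ x, ⟪f x, g y⟫ ∂μ ∂ν := by
        refine integral_congr_ae (Filter.Eventually.of_forall fun y => ?_)
        show ⟪∫ x, f x ∂μ, g y⟫ = ∫ x, ⟪f x, g y⟫ ∂μ
        calc ⟪∫ x, f x ∂μ, g y⟫ = ⟪g y, ∫ x, f x ∂μ⟫ := real_inner_comm _ _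
          _ = ∫ x, ⟪g y, f x⟫ ∂μ := (integral_inner hf _).symm
          _ = ∫ x, ⟪f x, g y⟫ ∂μ :=
              integral_congr_ae (Filter.Eventually.of_forall fun x => real_inner_comm _ _)
    _ = ∫ x, ∫ y, ⟪f x, g y⟫ ∂ν ∂μ := (integral_integral_swap hint).symm
    _ = ∫ z, ⟪f z.1, g z.2⟫ ∂(μ.prod ν) := integral_integral hint

end Aux

section Factor

variable {𝒳 : Type*} [MeasurableSpace 𝒳] {𝒴 : Type*} [MeasurableSpace 𝒴]
  {H : Type*} [NormedAddCommGroup H] [InnerProductSpace ℝ H]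
  {G : Type*} [NormedAddCommGroup G] [InnerProductSpace ℝ G]

lemma aux_factor {φ : 𝒳 → H} {ψ : 𝒴 → G}
    (hφ : StronglyMeasurable φ) (hψ : StronglyMeasurable ψ)
    (μ : Measure 𝒳) (ν : Measure 𝒴) [IsProbabilityMeasure μ] [IsProbabilityMeasure ν]
    (hfin : (∫⁻ x, (‖φ x‖₊ : ℝ≥0∞) ∂μ) * (∫⁻ y, (‖ψ y‖₊ : ℝ≥0∞) ∂ν) ≠ ∞) :
    ∫ z, ⟪φ z.1.1, φ z.2.1⟫ * ⟪ψ z.1.2, ψ z.2.2⟫ ∂((μ.prod ν).prod (μ.prod ν))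
      = (∫ q, ⟪φ q.1, φ q.2⟫ ∂(μ.prod μ)) * ∫ r, ⟪ψ r.1, ψ r.2⟫ ∂(ν.prod ν) := by
  by_cases hφi : Integrable φ μ
  · by_cases hψi : Integrable ψ ν
    · -- main case
      have hk : Integrable (fun q : 𝒳 × 𝒳 => ⟪φ q.1, φ q.2⟫) (μ.prod μ) :=
        aux_integrable_inner hφ hφ hφi hφi
      have hl : Integrable (fun r : 𝒴 × 𝒴 => ⟪ψ r.1, ψ r.2⟫) (ν.prod ν) :=
        aux_integrable_inner hψ hψ hψi hψi
      have hg : Integrable (fun w : 𝒳 × 𝒴 => ‖φ w.1‖ * ‖ψ w.2‖) (μ.prod ν) :=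
        hφi.norm.mul_prod hψi.norm
      have hbig : Integrable
          (fun z : (𝒳 × 𝒴) × 𝒳 × 𝒴 => ⟪φ z.1.1, φ z.2.1⟫ * ⟪ψ z.1.2, ψ z.2.2⟫)
          ((μ.prod ν).prod (μ.prod ν)) := by
        refine (hg.mul_prod hg).mono ?_ ?_
        · exact (((hφ.comp_measurable (measurable_fst.comp measurable_fst)).inner
            (hφ.comp_measurable (measurable_fst.comp measurable_snd))).mul
            ((hψ.comp_measurable (measurable_snd.comp measurable_fst)).inner
            (hψ.comp_measurable (measurable_snd.comp measurable_snd)))).aestronglyMeasurable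
        · refine Filter.Eventually.of_forall fun z => ?_
          calc ‖⟪φ z.1.1, φ z.2.1⟫ * ⟪ψ z.1.2, ψ z.2.2⟫‖
              = ‖⟪φ z.1.1, φ z.2.1⟫‖ * ‖⟪ψ z.1.2, ψ z.2.2⟫‖ := norm_mul _ _
            _ ≤ (‖φ z.1.1‖ * ‖φ z.2.1‖) * (‖ψ z.1.2‖ * ‖ψ z.2.2‖) := by
                exact mul_le_mul (norm_inner_le_norm _ _) (norm_inner_le_norm _ _)
                  (norm_nonneg _) (by positivity)
            _ = (‖φ z.1.1‖ * ‖ψ z.1.2‖) * (‖φ z.2.1‖ * ‖ψ z.2.2‖) := by ring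
            _ ≤ ‖(‖φ z.1.1‖ * ‖ψ z.1.2‖) * (‖φ z.2.1‖ * ‖ψ z.2.2‖)‖ := le_abs_self _
      calc ∫ z, ⟪φ z.1.1, φ z.2.1⟫ * ⟪ψ z.1.2, ψ z.2.2⟫ ∂((μ.prod ν).prod (μ.prod ν))
          = ∫ z, (∫ x, ⟪φ z.1, φ x⟫ ∂μ) * ∫ y, ⟪ψ z.2, ψ y⟫ ∂ν ∂(μ.prod ν) := by
            rw [integral_prod _ hbig]
            exact integral_congr_ae (Filter.Eventually.of_forall fun z =>
              integral_prod_mul (fun x => ⟪φ z.1, φ x⟫) (fun y => ⟪ψ z.2, ψ y⟫))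
        _ = (∫ x, ∫ x', ⟪φ x, φ x'⟫ ∂μ ∂μ) * ∫ y, ∫ y', ⟪ψ y, ψ y'⟫ ∂ν ∂ν :=
            integral_prod_mul (fun x => ∫ x', ⟪φ x, φ x'⟫ ∂μ)
              (fun y => ∫ y', ⟪ψ y, ψ y'⟫ ∂ν)
        _ = (∫ q, ⟪φ q.1, φ q.2⟫ ∂(μ.prod μ)) * ∫ r, ⟪ψ r.1, ψ r.2⟫ ∂(ν.prod ν) := by
            rw [integral_prod _ hk, integral_prod _ hl]
    · -- ψ not integrable ⇒ φ = 0 a.e.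
      have hb : ∫⁻ y, (‖ψ y‖₊ : ℝ≥0∞) ∂ν = ∞ := by
        by_contra h
        exact hψi ⟨hψ.aestronglyMeasurable, lt_top_iff_ne_top.mpr h⟩
      have ha : ∫⁻ x, (‖φ x‖₊ : ℝ≥0∞) ∂μ = 0 := by
        by_contra h
        exact hfin (by rw [hb, ENNReal.mul_top h])
      have hφ0 : ∀ᵐ x ∂μ, φ x = 0 := by
        have := (lintegral_eq_zero_iff hφ.nnnorm.measurable.coe_nnreal_ennreal).mp ha
        filter_upwards [this] with x hx
        simpa using hx
      have e1 : ∫ q, ⟪φ q.1, φ q.2⟫ ∂(μ.prod μ) = 0 := by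
        refine integral_eq_zero_of_ae ?_
        filter_upwards [Measure.quasiMeasurePreserving_fst.ae hφ0] with q hq
        simp [hq]
      have e2 : ∫ z, ⟪φ z.1.1, φ z.2.1⟫ * ⟪ψ z.1.2, ψ z.2.2⟫
          ∂((μ.prod ν).prod (μ.prod ν)) = 0 := by
        refine integral_eq_zero_of_ae ?_
        filter_upwards [(Measure.quasiMeasurePreserving_fst.comp
          Measure.quasiMeasurePreserving_fst).ae hφ0] with z hz
        simp [show φ z.1.1 = 0 from hz]
      rw [e1, e2, zero_mul]
  · -- φ not integrable ⇒ ψ = 0 a.e.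
    have ha : ∫⁻ x, (‖φ x‖₊ : ℝ≥0∞) ∂μ = ∞ := by
      by_contra h
      exact hφi ⟨hφ.aestronglyMeasurable, lt_top_iff_ne_top.mpr h⟩
    have hb : ∫⁻ y, (‖ψ y‖₊ : ℝ≥0∞) ∂ν = 0 := by
      by_contra h
      exact hfin (by rw [ha, ENNReal.top_mul h])
    have hψ0 : ∀ᵐ y ∂ν, ψ y = 0 := by
      have := (lintegral_eq_zero_iff hψ.nnnorm.measurable.coe_nnreal_ennreal).mp hb
      filter_upwards [this] with y hy
      simpa using hy
    have e1 : ∫ r, ⟪ψ r.1, ψ r.2⟫ ∂(ν.prod ν) = 0 := by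
      refine integral_eq_zero_of_ae ?_
      filter_upwards [Measure.quasiMeasurePreserving_fst.ae hψ0] with r hr
      simp [hr]
    have e2 : ∫ z, ⟪φ z.1.1, φ z.2.1⟫ * ⟪ψ z.1.2, ψ z.2.2⟫
        ∂((μ.prod ν).prod (μ.prod ν)) = 0 := by
      refine integral_eq_zero_of_ae ?_
      filter_upwards [(Measure.quasiMeasurePreserving_snd.comp
        Measure.quasiMeasurePreserving_fst).ae hψ0] with z hz
      simp [show ψ z.1.2 = 0 from hz]
    rw [e1, e2, mul_zero]

end Factor

/-- **HSIC as the squared MMD between the joint distribution and the product of the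
marginals:** with product-kernel feature map `Φ` satisfying
`⟪Φ(x,y), Φ(x',y')⟫ = k(x,x') l(y,y')`,
`‖∫ Φ dP − ∫ Φ d(P_X ⊗ P_Y)‖² = ∫∫ k·l d(P⊗P) + (∫∫ k d(P_X⊗P_X))(∫∫ l d(P_Y⊗P_Y))
  − 2 ∫∫∫ k(x,x'') l(y,y'') dP(x,y) dP_X(x'') dP_Y(y'')`. -/
theorem hsic_eq_sq_mmd_expansion
    {𝒳 : Type*} [MeasurableSpace 𝒳] {𝒴 : Type*} [MeasurableSpace 𝒴]
    {H : Type*} [NormedAddCommGroup H] [InnerProductSpace ℝ H]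
    {G : Type*} [NormedAddCommGroup G] [InnerProductSpace ℝ G]
    {F : Type*} [NormedAddCommGroup F] [InnerProductSpace ℝ F] [CompleteSpace F]
    (φ : 𝒳 → H) (ψ : 𝒴 → G) (Φ : 𝒳 × 𝒴 → F)
    (hφ : StronglyMeasurable φ) (hψ : StronglyMeasurable ψ) (hΦ : StronglyMeasurable Φ)
    (hprod : ∀ x y x' y', ⟪Φ (x, y), Φ (x', y')⟫ = ⟪φ x, φ x'⟫ * ⟪ψ y, ψ y'⟫)
    (P : Measure (𝒳 × 𝒴)) [IsProbabilityMeasure P]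
    (hΦP : Integrable Φ P)
    (hΦind : Integrable Φ ((P.map Prod.fst).prod (P.map Prod.snd))) :
    ‖(∫ z, Φ z ∂P) - ∫ z, Φ z ∂((P.map Prod.fst).prod (P.map Prod.snd))‖ ^ 2
      = (∫ p, ⟪φ p.1.1, φ p.2.1⟫ * ⟪ψ p.1.2, ψ p.2.2⟫ ∂(P.prod P))
        + (∫ q, ⟪φ q.1, φ q.2⟫ ∂((P.map Prod.fst).prod (P.map Prod.fst)))
          * (∫ r, ⟪ψ r.1, ψ r.2⟫ ∂((P.map Prod.snd).prod (P.map Prod.snd)))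
        - 2 * ∫ s, ⟪φ s.1.1, φ s.2.1⟫ * ⟪ψ s.1.2, ψ s.2.2⟫
              ∂(P.prod ((P.map Prod.fst).prod (P.map Prod.snd))) := by
  haveI : IsProbabilityMeasure (P.map (Prod.fst : 𝒳 × 𝒴 → 𝒳)) :=
    Measure.isProbabilityMeasure_map measurable_fst.aemeasurable
  haveI : IsProbabilityMeasure (P.map (Prod.snd : 𝒳 × 𝒴 → 𝒴)) :=
    Measure.isProbabilityMeasure_map measurable_snd.aemeasurable
  set Q : Measure (𝒳 × 𝒴) := (P.map Prod.fst).prod (P.map Prod.snd) with hQ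
  have hinner : ∀ z : (𝒳 × 𝒴) × 𝒳 × 𝒴,
      ⟪Φ z.1, Φ z.2⟫ = ⟪φ z.1.1, φ z.2.1⟫ * ⟪ψ z.1.2, ψ z.2.2⟫ := fun z =>
    hprod z.1.1 z.1.2 z.2.1 z.2.2
  -- pointwise norm factorization
  have hnorm : ∀ x y, ‖Φ (x, y)‖ = ‖φ x‖ * ‖ψ y‖ := by
    intro x y
    have h := hprod x y x y
    rw [real_inner_self_eq_norm_mul_norm, real_inner_self_eq_norm_mul_norm,
      real_inner_self_eq_norm_mul_norm] at h
    nlinarith [norm_nonneg (Φ (x, y)), norm_nonneg (φ x), norm_nonneg (ψ y),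
      mul_nonneg (norm_nonneg (φ x)) (norm_nonneg (ψ y))]
  have hfin : (∫⁻ x, (‖φ x‖₊ : ℝ≥0∞) ∂(P.map Prod.fst))
      * (∫⁻ y, (‖ψ y‖₊ : ℝ≥0∞) ∂(P.map Prod.snd)) ≠ ∞ := by
    have h1 : ∫⁻ z, (‖Φ z‖₊ : ℝ≥0∞) ∂Q
        = ∫⁻ z, ((‖φ z.1‖₊ : ℝ≥0∞) * (‖ψ z.2‖₊ : ℝ≥0∞)) ∂Q := by
      refine lintegral_congr fun z => ?_
      rw [← ENNReal.coe_mul]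
      congr 1
      exact NNReal.eq (by simp [coe_nnnorm, hnorm z.1 z.2])
    have h2 : ∫⁻ z, ((‖φ z.1‖₊ : ℝ≥0∞) * (‖ψ z.2‖₊ : ℝ≥0∞)) ∂Q
        = (∫⁻ x, (‖φ x‖₊ : ℝ≥0∞) ∂(P.map Prod.fst))
          * ∫⁻ y, (‖ψ y‖₊ : ℝ≥0∞) ∂(P.map Prod.snd) :=
      lintegral_prod_mul hφ.nnnorm.measurable.coe_nnreal_ennreal.aemeasurable hψ.nnnorm.measurable.coe_nnreal_ennreal.aemeasurable
    rw [← h2, ← h1]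
    exact hΦind.2.ne
  rw [norm_sub_sq_real, ← real_inner_self_eq_norm_sq, ← real_inner_self_eq_norm_sq,
    aux_inner_integral hΦ hΦ hΦP hΦP, aux_inner_integral hΦ hΦ hΦP hΦind,
    aux_inner_integral hΦ hΦ hΦind hΦind]
  have eA : ∫ z, ⟪Φ z.1, Φ z.2⟫ ∂(P.prod P)
      = ∫ p, ⟪φ p.1.1, φ p.2.1⟫ * ⟪ψ p.1.2, ψ p.2.2⟫ ∂(P.prod P) :=
    integral_congr_ae (Filter.Eventually.of_forall fun z => hinner z)
  have eD : ∫ z, ⟪Φ z.1, Φ z.2⟫ ∂(P.prod Q)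
      = ∫ s, ⟪φ s.1.1, φ s.2.1⟫ * ⟪ψ s.1.2, ψ s.2.2⟫ ∂(P.prod Q) :=
    integral_congr_ae (Filter.Eventually.of_forall fun z => hinner z)
  have eC : ∫ z, ⟪Φ z.1, Φ z.2⟫ ∂(Q.prod Q)
      = (∫ q, ⟪φ q.1, φ q.2⟫ ∂((P.map Prod.fst).prod (P.map Prod.fst)))
        * ∫ r, ⟪ψ r.1, ψ r.2⟫ ∂((P.map Prod.snd).prod (P.map Prod.snd)) := by
    rw [integral_congr_ae (Filter.Eventually.of_forall fun z => hinner z)]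
    exact aux_factor hφ hψ _ _ hfin
  rw [eA, eD, eC]
  ring
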